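/- Let (Ω, m) be a measure space, let 1 < p < ∞ with conjugate exponent p', let U : L^1(Ω,m) → L^p(Ω,m) be a bounded linear operator, let f_1,…,f_n ∈ L^{p'}(Ω,m) satisfy f_i·f_j = 0 almost everywhere for i ≠ j, and let x_1,…,x_n ∈ L^p(Ω,m) satisfy x_i·x_j = 0 almost everywhere for i ≠ j. Define T : L^1(Ω,m) → L^p(Ω,m) by T(a) = ∑_{i=1}^n (∫_Ω U(a)·f_i dm) x_i. Then T is bounded with ‖T‖ ≤ ‖U‖ · max_{1≤i≤n} ‖f_i‖_{p'}·‖x_i‖_p. -/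

import Mathlib

open MeasureTheory Set
open scoped ENNReal NNReal

lemma my_coeFn_sum {α E : Type*} [MeasurableSpace α] {μ : Measure α} [NormedAddCommGroup E]
    {q : ℝ≥0∞} {ι : Type*} (s : Finset ι) (g : ι → Lp E q μ) :
    (↑(∑ i ∈ s, g i) : α → E) =ᵐ[μ] fun t => ∑ i ∈ s, (g i : α → E) t := by
  induction s using Finset.cons_induction with
  | empty => simp only [Finset.sum_empty]; exact Lp.coeFn_zero E q μ
  | cons i s hi ih =>
      rw [Finset.sum_cons]
      refine (Lp.coeFn_add _ _).trans ?_
      filter_upwards [ih] with t ht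
      rw [Finset.sum_cons, Pi.add_apply, ht]


/-- let `(Ω, m)` be a measure space, `1 < p < ∞` with conjugate exponent
`p'`, let `U : L^1(Ω,m) → L^p(Ω,m)` be a bounded linear operator, let
`f_1,…,f_n ∈ L^{p'}(Ω,m)` have pairwise a.e. disjoint supports and let
`x_1,…,x_n ∈ L^p(Ω,m)` have pairwise a.e. disjoint supports.  Then the operator
`T : a ↦ ∑_i (∫ U(a)·f_i dm) x_i` (the sum of the rank-one operators `x_i ⊗ U'(f_i)`)
is bounded with `‖T‖ ≤ ‖U‖ · max_i ‖f_i‖_{p'}·‖x_i‖_p`, i.e.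
`‖T(a)‖_p ≤ (‖U‖ · max_i ‖f_i‖·‖x_i‖) · ‖a‖_1` for every `a`. -/
theorem stmt18 {Ω : Type*} [MeasurableSpace Ω] (m : Measure Ω)
    (p p' : ℝ) (hp : 1 < p) (hpp' : p.HolderConjugate p')
    [Fact (1 ≤ ENNReal.ofReal p)] [Fact (1 ≤ ENNReal.ofReal p')]
    (U : Lp ℂ 1 m →L[ℂ] Lp ℂ (ENNReal.ofReal p) m)
    (n : ℕ) (f : Fin n → Lp ℂ (ENNReal.ofReal p') m)
    (hf : ∀ i j, i ≠ j → (fun t => (f i : Ω → ℂ) t * (f j : Ω → ℂ) t) =ᵐ[m] 0)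
    (x : Fin n → Lp ℂ (ENNReal.ofReal p) m)
    (hx : ∀ i j, i ≠ j → (fun t => (x i : Ω → ℂ) t * (x j : Ω → ℂ) t) =ᵐ[m] 0)
    (a : Lp ℂ 1 m) :
    ‖∑ i, (∫ t, (U a : Ω → ℂ) t * (f i : Ω → ℂ) t ∂m) • x i‖ ≤
      (‖U‖ * ⨆ i, ‖f i‖ * ‖x i‖) * ‖a‖ := by
  classical
  have hp0 : 0 < p := one_pos.trans hp
  have hp'0 : 0 < p' := hpp'.symm.pos
  have hq0 : ENNReal.ofReal p ≠ 0 := by simp [ENNReal.ofReal_eq_zero, not_le, hp0]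
  have hqtop : ENNReal.ofReal p ≠ ∞ := ENNReal.ofReal_ne_top
  have hqt : (ENNReal.ofReal p).toReal = p := ENNReal.toReal_ofReal hp0.le
  have hq'0 : ENNReal.ofReal p' ≠ 0 := by simp [ENNReal.ofReal_eq_zero, not_le, hp'0]
  have hq't : (ENNReal.ofReal p').toReal = p' := ENNReal.toReal_ofReal hp'0.le
  set G : Ω → ℂ := (U a : Ω → ℂ) with hGdef
  set F : Fin n → Ω → ℂ := fun i => (f i : Ω → ℂ) with hFdef
  set X : Fin n → Ω → ℂ := fun i => (x i : Ω → ℂ) with hXdef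
  set c : Fin n → ℂ := fun i => ∫ t, G t * F i t ∂m with hcdef
  set M : ℝ := ⨆ i, ‖f i‖ * ‖x i‖ with hMdef
  have hGm : Measurable G := (Lp.stronglyMeasurable (U a)).measurable
  have hFm : ∀ i, Measurable (F i) := fun i => (Lp.stronglyMeasurable (f i)).measurable
  have hXm : ∀ i, Measurable (X i) := fun i => (Lp.stronglyMeasurable (x i)).measurable
  set A : Fin n → Set Ω := fun i => {t | F i t ≠ 0} with hAdef
  have hAm : ∀ i, MeasurableSet (A i) := fun i =>
    ((hFm i) (measurableSet_singleton (0:ℂ))).compl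
  have hMle : ∀ i, ‖f i‖ * ‖x i‖ ≤ M := fun i =>
    le_ciSup (f := fun j => ‖f j‖ * ‖x j‖) (Set.Finite.bddAbove (Set.finite_range _)) i
  have hM0 : 0 ≤ M := by
    rcases n with _ | n
    · simp [hMdef, Real.iSup_of_isEmpty]
    · exact le_trans (mul_nonneg (norm_nonneg _) (norm_nonneg _)) (hMle 0)
  have hRHS0 : 0 ≤ (‖U‖ * M) * ‖a‖ :=
    mul_nonneg (mul_nonneg (norm_nonneg _) hM0) (norm_nonneg _)
  -- a.e. disjointness
  have hae_x : ∀ᵐ t ∂m, ∀ i j, i ≠ j → X i t * X j t = 0 := by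
    rw [ae_all_iff]; intro i; rw [ae_all_iff]; intro j
    by_cases h : i = j
    · subst h; filter_upwards with t hij; exact absurd rfl hij
    · filter_upwards [hx i j h] with t ht _; simpa using ht
  have hae_f : ∀ᵐ t ∂m, ∀ i j, i ≠ j → F i t * F j t = 0 := by
    rw [ae_all_iff]; intro i; rw [ae_all_iff]; intro j
    by_cases h : i = j
    · subst h; filter_upwards with t hij; exact absurd rfl hij
    · filter_upwards [hf i j h] with t ht _; simpa using ht
  -- the eLpNorm as a lintegral
  have hel : ∀ (h : Ω → ℂ), eLpNorm h (ENNReal.ofReal p) m = (∫⁻ t, (‖h t‖₊ : ℝ≥0∞) ^ p ∂m) ^ (1/p) := by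
    intro h
    simp only [eLpNorm_eq_lintegral_rpow_enorm_toReal hq0 hqtop, hqt, enorm_eq_nnnorm]
  -- Step 1 : disjointness of x's
  have hstep1 : ∫⁻ t, (‖∑ i, c i • X i t‖₊ : ℝ≥0∞) ^ p ∂m
      = ∑ i, (‖c i‖₊ : ℝ≥0∞) ^ p * ∫⁻ t, (‖X i t‖₊ : ℝ≥0∞) ^ p ∂m := by
    have hmeas : ∀ i : Fin n, Measurable fun t => (‖c i • X i t‖₊ : ℝ≥0∞) ^ p := by
      intro i
      exact ((((hXm i).const_smul (c i)).nnnorm).coe_nnreal_ennreal).pow_const p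
    calc ∫⁻ t, (‖∑ i, c i • X i t‖₊ : ℝ≥0∞) ^ p ∂m
        = ∫⁻ t, ∑ i, (‖c i • X i t‖₊ : ℝ≥0∞) ^ p ∂m := by
          refine lintegral_congr_ae ?_
          filter_upwards [hae_x] with t ht
          by_cases hex : ∃ i, X i t ≠ 0
          · obtain ⟨i0, hi0⟩ := hex
            have hz : ∀ j, j ≠ i0 → X j t = 0 := by
              intro j hj
              have := ht j i0 hj
              rcases mul_eq_zero.mp this with h' | h'
              · exact h'
              · exact absurd h' hi0
            rw [Finset.sum_eq_single_of_mem i0 (Finset.mem_univ _)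
                (fun j _ hj => by simp [hz j hj]),
              Finset.sum_eq_single_of_mem i0 (Finset.mem_univ _)
                (fun j _ hj => by simp [hz j hj, ENNReal.zero_rpow_of_pos hp0])]
          · push_neg at hex
            simp [hex, ENNReal.zero_rpow_of_pos hp0]
      _ = ∑ i, ∫⁻ t, (‖c i • X i t‖₊ : ℝ≥0∞) ^ p ∂m :=
          lintegral_finset_sum _ (fun i _ => hmeas i)
      _ = ∑ i, (‖c i‖₊ : ℝ≥0∞) ^ p * ∫⁻ t, (‖X i t‖₊ : ℝ≥0∞) ^ p ∂m := by
          refine Finset.sum_congr rfl fun i _ => ?_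
          rw [← lintegral_const_mul _ (((hXm i).nnnorm.coe_nnreal_ennreal).pow_const p)]
          refine lintegral_congr fun t => ?_
          rw [← ENNReal.mul_rpow_of_nonneg _ _ hp0.le]
          congr 1
          rw [nnnorm_smul]
          push_cast
          ring
  -- Step 2 : Hölder
  have hstep2 : ∀ i, (‖c i‖₊ : ℝ≥0∞) ≤
      (∫⁻ t, (‖(A i).indicator G t‖₊ : ℝ≥0∞) ^ p ∂m) ^ (1/p) * ENNReal.ofReal ‖f i‖ := by
    intro i
    have h1 : (‖c i‖₊ : ℝ≥0∞) ≤ ∫⁻ t, ‖G t * F i t‖₊ ∂m :=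
      enorm_integral_le_lintegral_enorm _
    have h2 : ∀ t, (‖G t * F i t‖₊ : ℝ≥0∞)
        = ((fun t => (‖(A i).indicator G t‖₊ : ℝ≥0∞)) * fun t => (‖F i t‖₊ : ℝ≥0∞)) t := by
      intro t
      by_cases ht : F i t = 0
      · simp [ht, Set.indicator, hAdef]
      · have : t ∈ A i := ht
        simp [Set.indicator_of_mem this, nnnorm_mul]
    have h3 := ENNReal.lintegral_mul_le_Lp_mul_Lq m hpp'
      (f := fun t => (‖(A i).indicator G t‖₊ : ℝ≥0∞))
      (g := fun t => (‖F i t‖₊ : ℝ≥0∞))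
      (((hGm.indicator (hAm i)).nnnorm).coe_nnreal_ennreal).aemeasurable
      (((hFm i).nnnorm).coe_nnreal_ennreal).aemeasurable
    have h4 : (∫⁻ t, (‖F i t‖₊ : ℝ≥0∞) ^ p' ∂m) ^ (1/p') = ENNReal.ofReal ‖f i‖ := by
      have := eLpNorm_eq_lintegral_rpow_enorm_toReal (f := F i) (μ := m) hq'0 ENNReal.ofReal_ne_top
      rw [hq't] at this
      simp only [enorm_eq_nnnorm] at this
      rw [← this, Lp.norm_def, ENNReal.ofReal_toReal (Lp.eLpNorm_ne_top (f i))]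
    calc (‖c i‖₊ : ℝ≥0∞) ≤ ∫⁻ t, ‖G t * F i t‖₊ ∂m := h1
      _ = ∫⁻ t, ((fun t => (‖(A i).indicator G t‖₊ : ℝ≥0∞)) * fun t => (‖F i t‖₊ : ℝ≥0∞)) t ∂m :=
          lintegral_congr h2
      _ ≤ _ := h3
      _ = _ := by rw [h4]
  -- Step 3 : disjointness of the f's
  have hstep3 : ∑ i, ∫⁻ t, (‖(A i).indicator G t‖₊ : ℝ≥0∞) ^ p ∂m
      ≤ ∫⁻ t, (‖G t‖₊ : ℝ≥0∞) ^ p ∂m := by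
    rw [← lintegral_finset_sum _ (fun i _ =>
      (((hGm.indicator (hAm i)).nnnorm).coe_nnreal_ennreal).pow_const p)]
    refine lintegral_mono_ae ?_
    filter_upwards [hae_f] with t ht
    by_cases hex : ∃ i, F i t ≠ 0
    · obtain ⟨i0, hi0⟩ := hex
      have hz : ∀ j, j ≠ i0 → F j t = 0 := by
        intro j hj
        rcases mul_eq_zero.mp (ht j i0 hj) with h' | h'
        · exact h'
        · exact absurd h' hi0
      have hnot : ∀ j, j ≠ i0 → t ∉ A j := fun j hj => by
        simp [hAdef, hz j hj]
      rw [Finset.sum_eq_single_of_mem i0 (Finset.mem_univ _)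
        (fun j _ hj => by simp [Set.indicator_of_notMem (hnot j hj),
          ENNReal.zero_rpow_of_pos hp0])]
      have hmem : t ∈ A i0 := hi0
      rw [Set.indicator_of_mem hmem]
    · push_neg at hex
      have : ∀ j : Fin n, t ∉ A j := fun j => by simp [hAdef, hex j]
      simp [Set.indicator_of_notMem (this _), ENNReal.zero_rpow_of_pos hp0]
  -- Step 4 : norm of U a
  have hstep4 : ∫⁻ t, (‖G t‖₊ : ℝ≥0∞) ^ p ∂m ≤ (ENNReal.ofReal (‖U‖ * ‖a‖)) ^ p := by
    have h1 : (∫⁻ t, (‖G t‖₊ : ℝ≥0∞) ^ p ∂m) ^ (1/p) = eLpNorm (U a) (ENNReal.ofReal p) m := (hel G).symm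
    have h2 : eLpNorm (U a) (ENNReal.ofReal p) m ≤ ENNReal.ofReal (‖U‖ * ‖a‖) := by
      rw [← ENNReal.ofReal_toReal (Lp.eLpNorm_ne_top (U a)), ← Lp.norm_def]
      exact ENNReal.ofReal_le_ofReal (U.le_opNorm a)
    calc ∫⁻ t, (‖G t‖₊ : ℝ≥0∞) ^ p ∂m
        = ((∫⁻ t, (‖G t‖₊ : ℝ≥0∞) ^ p ∂m) ^ (1/p)) ^ p := by
          rw [← ENNReal.rpow_mul, one_div_mul_cancel hp0.ne', ENNReal.rpow_one]
      _ ≤ (ENNReal.ofReal (‖U‖ * ‖a‖)) ^ p :=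
          ENNReal.rpow_le_rpow (h1 ▸ h2) hp0.le
  -- norms of x i
  have hxi : ∀ i, ∫⁻ t, (‖X i t‖₊ : ℝ≥0∞) ^ p ∂m = (ENNReal.ofReal ‖x i‖) ^ p := by
    intro i
    have h1 : (∫⁻ t, (‖X i t‖₊ : ℝ≥0∞) ^ p ∂m) ^ (1/p) = ENNReal.ofReal ‖x i‖ := by
      rw [← hel (X i), Lp.norm_def, ENNReal.ofReal_toReal (Lp.eLpNorm_ne_top (x i))]
    rw [← h1, ← ENNReal.rpow_mul, one_div_mul_cancel hp0.ne', ENNReal.rpow_one]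
  -- Assemble
  have key : eLpNorm (fun t => ∑ i, c i • X i t) (ENNReal.ofReal p) m
      ≤ ENNReal.ofReal ((‖U‖ * M) * ‖a‖) := by
    rw [hel]
    have hbound : ∫⁻ t, (‖∑ i, c i • X i t‖₊ : ℝ≥0∞) ^ p ∂m
        ≤ (ENNReal.ofReal ((‖U‖ * M) * ‖a‖)) ^ p := by
      rw [hstep1]
      calc ∑ i, (‖c i‖₊ : ℝ≥0∞) ^ p * ∫⁻ t, (‖X i t‖₊ : ℝ≥0∞) ^ p ∂m
          ≤ ∑ i, (∫⁻ t, (‖(A i).indicator G t‖₊ : ℝ≥0∞) ^ p ∂m) *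
              (ENNReal.ofReal M) ^ p := by
            refine Finset.sum_le_sum fun i _ => ?_
            rw [hxi i]
            calc (‖c i‖₊ : ℝ≥0∞) ^ p * (ENNReal.ofReal ‖x i‖) ^ p
                ≤ ((∫⁻ t, (‖(A i).indicator G t‖₊ : ℝ≥0∞) ^ p ∂m) ^ (1/p)
                    * ENNReal.ofReal ‖f i‖) ^ p * (ENNReal.ofReal ‖x i‖) ^ p :=
                  mul_le_mul_left (ENNReal.rpow_le_rpow (hstep2 i) hp0.le) _
              _ = (∫⁻ t, (‖(A i).indicator G t‖₊ : ℝ≥0∞) ^ p ∂m) *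
                    (ENNReal.ofReal ‖f i‖ * ENNReal.ofReal ‖x i‖) ^ p := by
                  rw [ENNReal.mul_rpow_of_nonneg _ _ hp0.le,
                    ENNReal.mul_rpow_of_nonneg _ _ hp0.le,
                    ← ENNReal.rpow_mul, one_div_mul_cancel hp0.ne', ENNReal.rpow_one,
                    mul_assoc]
              _ ≤ (∫⁻ t, (‖(A i).indicator G t‖₊ : ℝ≥0∞) ^ p ∂m) *
                    (ENNReal.ofReal M) ^ p := by
                  refine mul_le_mul_right (ENNReal.rpow_le_rpow ?_ hp0.le) _
                  rw [← ENNReal.ofReal_mul (norm_nonneg _)]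
                  exact ENNReal.ofReal_le_ofReal (hMle i)
        _ = (∑ i, ∫⁻ t, (‖(A i).indicator G t‖₊ : ℝ≥0∞) ^ p ∂m) *
              (ENNReal.ofReal M) ^ p := by rw [Finset.sum_mul]
        _ ≤ (∫⁻ t, (‖G t‖₊ : ℝ≥0∞) ^ p ∂m) * (ENNReal.ofReal M) ^ p :=
            mul_le_mul_left hstep3 _
        _ ≤ (ENNReal.ofReal (‖U‖ * ‖a‖)) ^ p * (ENNReal.ofReal M) ^ p :=
            mul_le_mul_left hstep4 _
        _ = (ENNReal.ofReal ((‖U‖ * M) * ‖a‖)) ^ p := by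
            rw [← ENNReal.mul_rpow_of_nonneg _ _ hp0.le,
              ← ENNReal.ofReal_mul (mul_nonneg (norm_nonneg _) (norm_nonneg _))]
            congr 2
            ring
    calc (∫⁻ t, (‖∑ i, c i • X i t‖₊ : ℝ≥0∞) ^ p ∂m) ^ (1/p)
        ≤ ((ENNReal.ofReal ((‖U‖ * M) * ‖a‖)) ^ p) ^ (1/p) :=
          ENNReal.rpow_le_rpow hbound (by positivity)
      _ = ENNReal.ofReal ((‖U‖ * M) * ‖a‖) := by
          rw [← ENNReal.rpow_mul, mul_one_div_cancel hp0.ne', ENNReal.rpow_one]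
  -- conclude
  rw [Lp.norm_def]
  refine ENNReal.toReal_le_of_le_ofReal hRHS0 ?_
  have hco : (↑(∑ i, c i • x i) : Ω → ℂ) =ᵐ[m] fun t => ∑ i, c i • X i t := by
    refine (my_coeFn_sum Finset.univ (fun i => c i • x i)).trans ?_
    have hsm : ∀ᵐ t ∂m, ∀ i : Fin n, (↑(c i • x i) : Ω → ℂ) t = c i • X i t := by
      rw [ae_all_iff]; intro i
      filter_upwards [Lp.coeFn_smul (c i) (x i)] with t ht
      simpa using ht
    filter_upwards [hsm] with t ht
    exact Finset.sum_congr rfl fun i _ => ht i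
  calc eLpNorm (↑(∑ i, c i • x i)) (ENNReal.ofReal p) m
      = eLpNorm (fun t => ∑ i, c i • X i t) (ENNReal.ofReal p) m := eLpNorm_congr_ae hco
    _ ≤ ENNReal.ofReal ((‖U‖ * M) * ‖a‖) := key
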